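/- The improper integral over the real line of the complex rational function x ↦ (7 + 6i − (20−15i)x + (7−6i)x² + 15ix³)/((x−i)⁵(x+i)⁴) equals −(35/16)π + (25/8)πi; equivalently, i times this integral equals (−25/8 − 35i/16)π. -/

import Mathlib

open Complex MeasureTheory

open Filter Topology Complex MeasureTheory in
lemma case_b_hasDerivAt (c w : ℂ) (n : ℕ) (x : ℝ) (hw : (x : ℂ) + w ≠ 0) :
    HasDerivAt (fun y : ℝ => c / (((y : ℂ) + w) ^ n))
      ((0 * ((x : ℂ) + w) ^ n - c * ((n : ℂ) * ((x : ℂ) + w) ^ (n - 1) * 1)) /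
        (((x : ℂ) + w) ^ n) ^ 2) x := by
  have hz : HasDerivAt (fun z : ℂ => c / ((z + w) ^ n))
      ((0 * ((x : ℂ) + w) ^ n - c * ((n : ℂ) * ((x : ℂ) + w) ^ (n - 1) * 1)) /
        (((x : ℂ) + w) ^ n) ^ 2) (x : ℂ) :=
    (hasDerivAt_const _ c).div (((hasDerivAt_id _).add_const w).pow n) (pow_ne_zero _ hw)
  exact hz.comp_ofReal

open Filter Topology Complex in
lemma case_b_tendsto {l : Filter ℝ} (hl : Tendsto (fun x : ℝ => |x|) l atTop)
    (c w : ℂ) (n : ℕ) (hn : 1 ≤ n) :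
    Tendsto (fun x : ℝ => c / (((x : ℂ) + w) ^ n)) l (𝓝 0) := by
  apply squeeze_zero_norm' (a := fun x : ℝ => ‖c‖ / (|x| - ‖w‖))
  · filter_upwards [hl.eventually_ge_atTop (‖w‖ + 1)] with x hx
    have h0 : |x| - ‖w‖ ≤ ‖(x : ℂ) + w‖ := by
      have h : ‖(x : ℂ)‖ ≤ ‖(x : ℂ) + w‖ + ‖w‖ := by
        calc ‖(x : ℂ)‖ = ‖((x : ℂ) + w) + (-w)‖ := by ring_nf
          _ ≤ ‖(x : ℂ) + w‖ + ‖-w‖ := norm_add_le _ _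
          _ = ‖(x : ℂ) + w‖ + ‖w‖ := by rw [norm_neg]
      have hxx : ‖(x : ℂ)‖ = |x| := by simp
      linarith
    have h1 : (1 : ℝ) ≤ ‖(x : ℂ) + w‖ := by linarith
    have h2 : |x| - ‖w‖ ≤ ‖((x : ℂ) + w) ^ n‖ := by
      rw [norm_pow]
      calc |x| - ‖w‖ ≤ ‖(x : ℂ) + w‖ := h0
        _ ≤ ‖(x : ℂ) + w‖ ^ n := le_self_pow₀ h1 (by omega)
    rw [norm_div]
    exact div_le_div_of_nonneg_left (norm_nonneg c) (by linarith) h2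
  · have h3 : Tendsto (fun t : ℝ => ‖c‖ / (t - ‖w‖)) atTop (𝓝 0) :=
      tendsto_const_nhds.div_atTop (tendsto_atTop_add_const_right _ _ tendsto_id)
    exact h3.comp hl

open Filter Topology Complex MeasureTheory in
lemma case_b_integrable (c w : ℂ) (hnorm : ∀ x : ℝ, ‖(x : ℂ) + w‖ ^ 2 = x ^ 2 + 1)
    (n : ℕ) (hn : 2 ≤ n) :
    Integrable (fun x : ℝ => c / (((x : ℂ) + w) ^ n)) := by
  have hne : ∀ x : ℝ, (x : ℂ) + w ≠ 0 := by
    intro x h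
    have h2 := hnorm x
    rw [h] at h2
    simp at h2
    nlinarith [sq_nonneg x]
  apply (integrable_inv_one_add_sq.const_mul ‖c‖).mono'
  · exact Continuous.aestronglyMeasurable <|
      continuous_const.div ((Complex.continuous_ofReal.add continuous_const).pow n)
        (fun x => pow_ne_zero _ (hne x))
  · filter_upwards with x
    have h1 : (1 : ℝ) ≤ ‖(x : ℂ) + w‖ := by
      nlinarith [hnorm x, sq_nonneg x, norm_nonneg ((x : ℂ) + w)]
    have h2 : (1 + x ^ 2 : ℝ) ≤ ‖((x : ℂ) + w) ^ n‖ := by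
      rw [norm_pow]
      calc (1 + x ^ 2 : ℝ) = ‖(x : ℂ) + w‖ ^ 2 := by rw [hnorm x]; ring
        _ ≤ ‖(x : ℂ) + w‖ ^ n := pow_le_pow_right₀ h1 hn
    rw [norm_div]
    calc ‖c‖ / ‖((x : ℂ) + w) ^ n‖ ≤ ‖c‖ / (1 + x ^ 2) :=
          div_le_div_of_nonneg_left (norm_nonneg c) (by positivity) h2
      _ = ‖c‖ * (1 + x ^ 2)⁻¹ := by rw [div_eq_mul_inv]

noncomputable def caseB_g : ℝ → ℂ := fun x =>
  (25/16 + 35/32*Complex.I)*2*Complex.I*((((1+x^2)⁻¹ : ℝ)) : ℂ)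
  + (3/4 - 21/16*Complex.I)/(((x:ℂ) + -Complex.I)^2)
  + (-3/8 - 1/8*Complex.I)/(((x:ℂ) + -Complex.I)^3)
  + (1/2 - Complex.I)/(((x:ℂ) + -Complex.I)^4)
  + (-(1/2)*Complex.I)/(((x:ℂ) + -Complex.I)^5)
  + (23/16 - 29/16*Complex.I)/(((x:ℂ) + Complex.I)^2)
  + (11/8 + 3/2*Complex.I)/(((x:ℂ) + Complex.I)^3)
  + (-1)/(((x:ℂ) + Complex.I)^4)

noncomputable def caseB_F : ℝ → ℂ := fun x =>
  (25/16 + 35/32*Complex.I)*2*Complex.I*((Real.arctan x : ℝ) : ℂ)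
  + (-(3/4 - 21/16*Complex.I))/(((x:ℂ) + -Complex.I)^1)
  + (-(-3/8 - 1/8*Complex.I)/2)/(((x:ℂ) + -Complex.I)^2)
  + (-(1/2 - Complex.I)/3)/(((x:ℂ) + -Complex.I)^3)
  + (-(-(1/2)*Complex.I)/4)/(((x:ℂ) + -Complex.I)^4)
  + (-(23/16 - 29/16*Complex.I))/(((x:ℂ) + Complex.I)^1)
  + (-(11/8 + 3/2*Complex.I)/2)/(((x:ℂ) + Complex.I)^2)
  + (-(-1)/3)/(((x:ℂ) + Complex.I)^3)

lemma case_b_ne_m (x : ℝ) : (x : ℂ) + -Complex.I ≠ 0 := by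
  intro h
  have := congrArg Complex.im h
  simp at this

lemma case_b_ne_p (x : ℝ) : (x : ℂ) + Complex.I ≠ 0 := by
  intro h
  have := congrArg Complex.im h
  simp at this

lemma case_b_deriv_val (c w : ℂ) (n : ℕ) (x : ℝ) (hw : (x : ℂ) + w ≠ 0) :
    (0 * ((x : ℂ) + w) ^ n - c * ((n : ℂ) * ((x : ℂ) + w) ^ (n - 1) * 1)) /
        (((x : ℂ) + w) ^ n) ^ 2
      = (-(c * (n : ℂ))) / (((x : ℂ) + w) ^ (n + 1)) := by
  rcases n with _ | m
  · simp
  · rw [div_eq_div_iff (pow_ne_zero _ (pow_ne_zero _ hw)) (pow_ne_zero _ hw),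
      Nat.succ_sub_one]
    push_cast
    ring

set_option maxHeartbeats 1000000 in
lemma caseB_hasDerivAt (x : ℝ) : HasDerivAt caseB_F (caseB_g x) x := by
  have hm := case_b_ne_m x
  have hp := case_b_ne_p x
  have h0 : HasDerivAt (fun y : ℝ =>
      (25/16 + 35/32*Complex.I)*2*Complex.I*((Real.arctan y : ℝ) : ℂ))
      ((25/16 + 35/32*Complex.I)*2*Complex.I*(((1/(1+x^2) : ℝ)) : ℂ)) x :=
    HasDerivAt.const_mul _ (Real.hasDerivAt_arctan x).ofReal_comp
  have h1 := case_b_hasDerivAt (-(3/4 - 21/16*Complex.I)) (-Complex.I) 1 x hm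
  have h2 := case_b_hasDerivAt (-(-3/8 - 1/8*Complex.I)/2) (-Complex.I) 2 x hm
  have h3 := case_b_hasDerivAt (-(1/2 - Complex.I)/3) (-Complex.I) 3 x hm
  have h4 := case_b_hasDerivAt (-(-(1/2)*Complex.I)/4) (-Complex.I) 4 x hm
  have h5 := case_b_hasDerivAt (-(23/16 - 29/16*Complex.I)) (Complex.I) 1 x hp
  have h6 := case_b_hasDerivAt (-(11/8 + 3/2*Complex.I)/2) (Complex.I) 2 x hp
  have h7 := case_b_hasDerivAt (-(-1)/3) (Complex.I) 3 x hp
  rw [case_b_deriv_val _ _ _ _ hm] at h1 h2 h3 h4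
  rw [case_b_deriv_val _ _ _ _ hp] at h5 h6 h7
  have H := ((((((h0.add h1).add h2).add h3).add h4).add h5).add h6).add h7
  refine H.congr_deriv ?_
  unfold caseB_g
  push_cast
  ring

lemma caseB_integrable : Integrable caseB_g := by
  have hnm : ∀ x : ℝ, ‖(x : ℂ) + -Complex.I‖ ^ 2 = x ^ 2 + 1 := by
    intro x
    rw [Complex.sq_norm, Complex.normSq_apply]
    simp
    ring
  have hnp : ∀ x : ℝ, ‖(x : ℂ) + Complex.I‖ ^ 2 = x ^ 2 + 1 := by
    intro x
    rw [Complex.sq_norm, Complex.normSq_apply]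
    simp
    ring
  unfold caseB_g
  exact (((((((integrable_inv_one_add_sq.ofReal.const_mul
      ((25/16 + 35/32*Complex.I)*2*Complex.I)).add
    (case_b_integrable _ _ hnm 2 (by norm_num))).add
    (case_b_integrable _ _ hnm 3 (by norm_num))).add
    (case_b_integrable _ _ hnm 4 (by norm_num))).add
    (case_b_integrable _ _ hnm 5 (by norm_num))).add
    (case_b_integrable _ _ hnp 2 (by norm_num))).add
    (case_b_integrable _ _ hnp 3 (by norm_num))).add
    (case_b_integrable _ _ hnp 4 (by norm_num))

open Filter Topology in
lemma caseB_tendsto_top : Tendsto caseB_F atTop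
    (𝓝 ((25/16 + 35/32*Complex.I)*2*Complex.I*((Real.pi/2 : ℝ) : ℂ))) := by
  have h0 : Tendsto (fun y : ℝ =>
      (25/16 + 35/32*Complex.I)*2*Complex.I*((Real.arctan y : ℝ) : ℂ)) atTop
      (𝓝 ((25/16 + 35/32*Complex.I)*2*Complex.I*((Real.pi/2 : ℝ) : ℂ))) :=
    Tendsto.const_mul _ ((Complex.continuous_ofReal.tendsto _).comp
      (Real.tendsto_arctan_atTop.mono_right nhdsWithin_le_nhds))
  have hl : Tendsto (fun x : ℝ => |x|) atTop atTop := tendsto_abs_atTop_atTop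
  have H := ((((((h0.add
    (case_b_tendsto hl (-(3/4 - 21/16*Complex.I)) (-Complex.I) 1 le_rfl)).add
    (case_b_tendsto hl (-(-3/8 - 1/8*Complex.I)/2) (-Complex.I) 2 (by norm_num))).add
    (case_b_tendsto hl (-(1/2 - Complex.I)/3) (-Complex.I) 3 (by norm_num))).add
    (case_b_tendsto hl (-(-(1/2)*Complex.I)/4) (-Complex.I) 4 (by norm_num))).add
    (case_b_tendsto hl (-(23/16 - 29/16*Complex.I)) (Complex.I) 1 le_rfl)).add
    (case_b_tendsto hl (-(11/8 + 3/2*Complex.I)/2) (Complex.I) 2 (by norm_num))).add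
    (case_b_tendsto hl (-(-1)/3) (Complex.I) 3 (by norm_num))
  have H2 : Tendsto caseB_F atTop
      (𝓝 ((25/16 + 35/32*Complex.I)*2*Complex.I*((Real.pi/2 : ℝ) : ℂ)
        + 0 + 0 + 0 + 0 + 0 + 0 + 0)) := H
  simpa using H2

open Filter Topology in
lemma caseB_tendsto_bot : Tendsto caseB_F atBot
    (𝓝 ((25/16 + 35/32*Complex.I)*2*Complex.I*((-(Real.pi/2) : ℝ) : ℂ))) := by
  have h0 : Tendsto (fun y : ℝ =>
      (25/16 + 35/32*Complex.I)*2*Complex.I*((Real.arctan y : ℝ) : ℂ)) atBot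
      (𝓝 ((25/16 + 35/32*Complex.I)*2*Complex.I*((-(Real.pi/2) : ℝ) : ℂ))) :=
    Tendsto.const_mul _ ((Complex.continuous_ofReal.tendsto _).comp
      (Real.tendsto_arctan_atBot.mono_right nhdsWithin_le_nhds))
  have hl : Tendsto (fun x : ℝ => |x|) atBot atTop := tendsto_abs_atBot_atTop
  have H := ((((((h0.add
    (case_b_tendsto hl (-(3/4 - 21/16*Complex.I)) (-Complex.I) 1 le_rfl)).add
    (case_b_tendsto hl (-(-3/8 - 1/8*Complex.I)/2) (-Complex.I) 2 (by norm_num))).add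
    (case_b_tendsto hl (-(1/2 - Complex.I)/3) (-Complex.I) 3 (by norm_num))).add
    (case_b_tendsto hl (-(-(1/2)*Complex.I)/4) (-Complex.I) 4 (by norm_num))).add
    (case_b_tendsto hl (-(23/16 - 29/16*Complex.I)) (Complex.I) 1 le_rfl)).add
    (case_b_tendsto hl (-(11/8 + 3/2*Complex.I)/2) (Complex.I) 2 (by norm_num))).add
    (case_b_tendsto hl (-(-1)/3) (Complex.I) 3 (by norm_num))
  have H2 : Tendsto caseB_F atBot
      (𝓝 ((25/16 + 35/32*Complex.I)*2*Complex.I*((-(Real.pi/2) : ℝ) : ℂ)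
        + 0 + 0 + 0 + 0 + 0 + 0 + 0)) := H
  simpa using H2

set_option maxHeartbeats 1000000 in
lemma caseB_eq (x : ℝ) :
    ((7 + 6 * I - (20 - 15 * I) * x + (7 - 6 * I) * x ^ 2 + 15 * I * x ^ 3) /
        ((x - I) ^ 5 * (x + I) ^ 4) : ℂ) = caseB_g x := by
  have hm := case_b_ne_m x
  have hp := case_b_ne_p x
  have hD : ((x:ℂ) + -Complex.I)^5 * (((x:ℂ) + Complex.I)^4) ≠ 0 :=
    mul_ne_zero (pow_ne_zero _ hm) (pow_ne_zero _ hp)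
  have hS : ((1:ℂ) + (x:ℂ)^2) = ((x:ℂ) + -Complex.I) * ((x:ℂ) + Complex.I) := by
    linear_combination Complex.I_sq
  unfold caseB_g
  push_cast
  rw [show ((x:ℂ) - I) = ((x:ℂ) + -Complex.I) from sub_eq_add_neg _ _, hS]
  have e0 : (25/16 + 35/32*Complex.I)*2*Complex.I*((((x:ℂ) + -Complex.I) * ((x:ℂ) + Complex.I))⁻¹)
      = ((25/16 + 35/32*Complex.I)*2*Complex.I*(((x:ℂ) + -Complex.I)^4 * ((x:ℂ) + Complex.I)^3))
        / (((x:ℂ) + -Complex.I)^5 * (((x:ℂ) + Complex.I)^4)) := by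
    rw [← div_eq_mul_inv, div_eq_div_iff (mul_ne_zero hm hp) hD]
    ring
  have e2 : (3/4 - 21/16*Complex.I)/(((x:ℂ) + -Complex.I)^2)
      = ((3/4 - 21/16*Complex.I) * (((x:ℂ) + -Complex.I)^3 * ((x:ℂ) + Complex.I)^4))
        / (((x:ℂ) + -Complex.I)^5 * (((x:ℂ) + Complex.I)^4)) := by
    rw [div_eq_div_iff (pow_ne_zero _ hm) hD]; ring
  have e3 : (-3/8 - 1/8*Complex.I)/(((x:ℂ) + -Complex.I)^3)
      = ((-3/8 - 1/8*Complex.I) * (((x:ℂ) + -Complex.I)^2 * ((x:ℂ) + Complex.I)^4))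
        / (((x:ℂ) + -Complex.I)^5 * (((x:ℂ) + Complex.I)^4)) := by
    rw [div_eq_div_iff (pow_ne_zero _ hm) hD]; ring
  have e4 : (1/2 - Complex.I)/(((x:ℂ) + -Complex.I)^4)
      = ((1/2 - Complex.I) * (((x:ℂ) + -Complex.I) * ((x:ℂ) + Complex.I)^4))
        / (((x:ℂ) + -Complex.I)^5 * (((x:ℂ) + Complex.I)^4)) := by
    rw [div_eq_div_iff (pow_ne_zero _ hm) hD]; ring
  have e5 : (-(1/2)*Complex.I)/(((x:ℂ) + -Complex.I)^5)
      = ((-(1/2)*Complex.I) * (((x:ℂ) + Complex.I)^4))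
        / (((x:ℂ) + -Complex.I)^5 * (((x:ℂ) + Complex.I)^4)) := by
    rw [div_eq_div_iff (pow_ne_zero _ hm) hD]; ring
  have e6 : (23/16 - 29/16*Complex.I)/(((x:ℂ) + Complex.I)^2)
      = ((23/16 - 29/16*Complex.I) * (((x:ℂ) + -Complex.I)^5 * ((x:ℂ) + Complex.I)^2))
        / (((x:ℂ) + -Complex.I)^5 * (((x:ℂ) + Complex.I)^4)) := by
    rw [div_eq_div_iff (pow_ne_zero _ hp) hD]; ring
  have e7 : (11/8 + 3/2*Complex.I)/(((x:ℂ) + Complex.I)^3)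
      = ((11/8 + 3/2*Complex.I) * (((x:ℂ) + -Complex.I)^5 * ((x:ℂ) + Complex.I)))
        / (((x:ℂ) + -Complex.I)^5 * (((x:ℂ) + Complex.I)^4)) := by
    rw [div_eq_div_iff (pow_ne_zero _ hp) hD]; ring
  have e8 : ((-1 : ℂ))/(((x:ℂ) + Complex.I)^4)
      = ((-1 : ℂ) * (((x:ℂ) + -Complex.I)^5))
        / (((x:ℂ) + -Complex.I)^5 * (((x:ℂ) + Complex.I)^4)) := by
    rw [div_eq_div_iff (pow_ne_zero _ hp) hD]; ring
  rw [e0, e2, e3, e4, e5, e6, e7, e8]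
  simp only [← add_div]
  congr 1
  linear_combination ((7) + (6)*Complex.I + (-7)*Complex.I^2 + (-6)*Complex.I^3 + (7)*Complex.I^4
    + (6)*Complex.I^5 + (-25/4)*Complex.I^6 + (-20)*(x:ℂ)^1 + (15)*(x:ℂ)^1*Complex.I
    + (20)*(x:ℂ)^1*Complex.I^2 + (-15)*(x:ℂ)^1*Complex.I^3 + (-23/2)*(x:ℂ)^1*Complex.I^4
    + (29/4)*(x:ℂ)^1*Complex.I^5 + (7)*(x:ℂ)^2 + (-6)*(x:ℂ)^2*Complex.I + (-7)*(x:ℂ)^2*Complex.I^2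
    + (23/2)*(x:ℂ)^2*Complex.I^4 + (15)*(x:ℂ)^3*Complex.I + (11)*(x:ℂ)^3*Complex.I^2
    + (-29/2)*(x:ℂ)^3*Complex.I^3 + (-6)*(x:ℂ)^4*Complex.I + (-17/4)*(x:ℂ)^4*Complex.I^2
    + (1/2)*(x:ℂ)^5 + (29/4)*(x:ℂ)^5*Complex.I + (-1)*(x:ℂ)^6
    + (-35/16)*Complex.I^7 + (35/16)*(x:ℂ)*Complex.I^6 + (105/16)*(x:ℂ)^2*Complex.I^5
    + (-105/16)*(x:ℂ)^3*Complex.I^4 + (-105/16)*(x:ℂ)^4*Complex.I^3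
    + (105/16)*(x:ℂ)^5*Complex.I^2 + (35/16)*(x:ℂ)^6*Complex.I + (-35/16)*(x:ℂ)^7) * Complex.I_sq

theorem integral_case_b :
    (∫ x : ℝ, ((7 + 6 * I - (20 - 15 * I) * x + (7 - 6 * I) * x ^ 2 + 15 * I * x ^ 3) /
        ((x - I) ^ 5 * (x + I) ^ 4) : ℂ)
      = -((35 : ℂ) / 16) * (Real.pi : ℂ) + ((25 : ℂ) / 8) * (Real.pi : ℂ) * I) ∧
    I * (∫ x : ℝ, ((7 + 6 * I - (20 - 15 * I) * x + (7 - 6 * I) * x ^ 2 + 15 * I * x ^ 3) /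
        ((x - I) ^ 5 * (x + I) ^ 4) : ℂ))
      = (-(25 : ℂ) / 8 - 35 * I / 16) * (Real.pi : ℂ) := by
  have hmain : (∫ x : ℝ, ((7 + 6 * I - (20 - 15 * I) * x + (7 - 6 * I) * x ^ 2 + 15 * I * x ^ 3) /
        ((x - I) ^ 5 * (x + I) ^ 4) : ℂ)
      = -((35 : ℂ) / 16) * (Real.pi : ℂ) + ((25 : ℂ) / 8) * (Real.pi : ℂ) * I) := by
    have hint := integral_of_hasDerivAt_of_tendsto caseB_hasDerivAt caseB_integrable
      caseB_tendsto_bot caseB_tendsto_top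
    rw [show (∫ x : ℝ, ((7 + 6 * I - (20 - 15 * I) * x + (7 - 6 * I) * x ^ 2 + 15 * I * x ^ 3) /
        ((x - I) ^ 5 * (x + I) ^ 4) : ℂ)) = ∫ x : ℝ, caseB_g x from
      integral_congr_ae (Filter.Eventually.of_forall caseB_eq), hint]
    push_cast
    linear_combination ((35:ℂ)/16) * (Real.pi : ℂ) * Complex.I_sq
  refine ⟨hmain, ?_⟩
  rw [hmain]
  linear_combination ((25:ℂ)/8) * (Real.pi : ℂ) * Complex.I_sq
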